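/- (Final Frontier Theorem) In Mem⁰, if G(n_∞) = m and a > 2n, then G(a_∞) ≠ m, where x_∞ denotes the position (x, x+1). -/
import Mathlib


/-- Grundy value of Mem⁰: options of (n,k) are (n-a, a) for 1 ≤ a ≤ n, a ≠ k. -/
noncomputable def memZeroG (n k : ℕ) : ℕ :=
  sInf {v : ℕ | v ∉ (((Finset.Icc 1 n).erase k).attach.image
    (fun a => memZeroG (n - a.1) a.1))}
termination_by n
decreasing_by
  have h := Finset.mem_Icc.mp (Finset.mem_of_mem_erase a.2)
  omega

lemma attach_image_eq (s : Finset ℕ) (f : ℕ → ℕ) :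
    s.attach.image (fun a => f a.1) = s.image f := by
  ext v
  simp [Finset.mem_image]

lemma memZeroG_eq (n k : ℕ) :
    memZeroG n k = sInf {v : ℕ | v ∉ ((Finset.Icc 1 n).erase k).image
      (fun a => memZeroG (n - a) a)} := by
  rw [memZeroG, attach_image_eq _ (fun x => memZeroG (n - x) x)]

lemma memZeroG_of_gt (n k : ℕ) (hk : n < k) :
    memZeroG n k = memZeroG n (n + 1) := by
  rw [memZeroG_eq, memZeroG_eq]
  have h1 : (Finset.Icc 1 n).erase k = Finset.Icc 1 n := by
    apply Finset.erase_eq_of_notMem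
    simp [Finset.mem_Icc]; omega
  have h2 : (Finset.Icc 1 n).erase (n + 1) = Finset.Icc 1 n := by
    apply Finset.erase_eq_of_notMem
    simp [Finset.mem_Icc]
  rw [h1, h2]

lemma memZeroG_notMem (n k : ℕ) :
    memZeroG n k ∉ ((Finset.Icc 1 n).erase k).image
      (fun a => memZeroG (n - a) a) := by
  have hne : {v : ℕ | v ∉ ((Finset.Icc 1 n).erase k).image
      (fun a => memZeroG (n - a) a)}.Nonempty := by
    have : {v : ℕ | v ∉ ((Finset.Icc 1 n).erase k).image
      (fun a => memZeroG (n - a) a)} = (↑(((Finset.Icc 1 n).erase k).image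
      (fun a => memZeroG (n - a) a)) : Set ℕ)ᶜ := rfl
    rw [this]
    exact (Finset.finite_toSet _).infinite_compl.nonempty
  have := Nat.sInf_mem hne
  rw [← memZeroG_eq] at this
  exact this

/-- Final Frontier Theorem: if G(n_∞) = m and a > 2n, then G(a_∞) ≠ m. -/
theorem memZero_final_frontier (n m a : ℕ) (h : memZeroG n (n + 1) = m)
    (ha : 2 * n < a) : memZeroG a (a + 1) ≠ m := by
  intro hm
  have key := memZeroG_notMem a (a + 1)
  apply key
  rw [Finset.mem_image]
  refine ⟨a - n, ?_, ?_⟩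
  · rw [Finset.mem_erase, Finset.mem_Icc]
    omega
  · have h1 : a - (a - n) = n := by omega
    rw [h1, memZeroG_of_gt n (a - n) (by omega), h, hm]
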